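/- Let a be a finite-dimensional central simple F-algebra (not necessarily associative) and A a unital commutative associative F-algebra. Then every F-algebra automorphism of a ⊗ A is the composition of an automorphism induced by an F-algebra automorphism of A (acting on the second tensor factor) and an A-algebra automorphism of a ⊗ A; i.e. Aut_{F-Alg}(a ⊗ A) = Aut_{F-Alg}(A) ⋉ Aut_{A-Alg}(a ⊗ A). -/

import Mathlib

open TensorProduct


section AutTensorAux

variable {F a A : Type*} [Field F]
  [NonUnitalNonAssocRing a] [Module F a] [SMulCommClass F a a] [IsScalarTower F a a]
  [CommRing A] [Algebra F A]

/-- `γ_p : x ⊗ q ↦ x ⊗ pq`. -/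
noncomputable def gam (F : Type*) {a A : Type*} [Field F]
    [NonUnitalNonAssocRing a] [Module F a]
    [CommRing A] [Algebra F A] (p : A) : a ⊗[F] A →ₗ[F] a ⊗[F] A :=
  LinearMap.lTensor a (LinearMap.mulLeft F p)

@[simp] lemma gam_tmul (p : A) (x : a) (q : A) :
    gam F p (x ⊗ₜ[F] q) = x ⊗ₜ[F] (p * q) := rfl

lemma gam_cent_left (p : A) (u v : a ⊗[F] A) : gam F p (u * v) = u * gam F p v := by
  induction u using TensorProduct.induction_on with
  | zero => simp [zero_mul]
  | tmul x q =>
    induction v using TensorProduct.induction_on with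
    | zero => simp [mul_zero]
    | tmul y r => simp [mul_left_comm]
    | add v₁ v₂ h1 h2 => simp [mul_add, map_add, h1, h2]
  | add u₁ u₂ h1 h2 => simp [add_mul, map_add, h1, h2]

lemma gam_cent_right (p : A) (u v : a ⊗[F] A) : gam F p (u * v) = gam F p u * v := by
  induction u using TensorProduct.induction_on with
  | zero => simp [zero_mul]
  | tmul x q =>
    induction v using TensorProduct.induction_on with
    | zero => simp [mul_zero]
    | tmul y r => simp [mul_assoc]
    | add v₁ v₂ h1 h2 => simp [mul_add, map_add, h1, h2]
  | add u₁ u₂ h1 h2 => simp [add_mul, map_add, h1, h2]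

/-- products span `a ⊗ A`, given that `a` is simple with nonzero multiplication -/
lemma span_products_top
    (hsimple₁ : ∃ x y : a, x * y ≠ 0)
    (hsimple₂ : ∀ I : Submodule F a,
      (∀ x ∈ I, ∀ y : a, x * y ∈ I ∧ y * x ∈ I) → I = ⊥ ∨ I = ⊤) :
    Submodule.span F {w : a ⊗[F] A | ∃ u v : a ⊗[F] A, u * v = w} = ⊤ := by
  -- first: products span `a`
  have ha : Submodule.span F {z : a | ∃ x y : a, x * y = z} = ⊤ := by
    rcases hsimple₂ (Submodule.span F {z : a | ∃ x y : a, x * y = z})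
      (fun x _ y => ⟨Submodule.subset_span ⟨x, y, rfl⟩,
        Submodule.subset_span ⟨y, x, rfl⟩⟩) with h | h
    · exfalso
      obtain ⟨x, y, hxy⟩ := hsimple₁
      have hmem : x * y ∈ Submodule.span F {z : a | ∃ x y : a, x * y = z} :=
        Submodule.subset_span ⟨x, y, rfl⟩
      rw [h] at hmem
      exact hxy (by simpa using hmem)
    · exact h
  set T := Submodule.span F {w : a ⊗[F] A | ∃ u v : a ⊗[F] A, u * v = w} with hT
  rw [eq_top_iff]
  rintro u -
  induction u using TensorProduct.induction_on with
  | zero => exact T.zero_mem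
  | tmul x p =>
    -- the set of `x` with `x ⊗ p ∈ T` is a submodule containing products
    have : x ∈ Submodule.comap ((TensorProduct.mk F a A).flip p) T := by
      have hx : (⊤ : Submodule F a) ≤
          Submodule.comap ((TensorProduct.mk F a A).flip p) T := by
        rw [← ha]
        refine Submodule.span_le.2 ?_
        rintro z ⟨y, w, rfl⟩
        have : (y * w) ⊗ₜ[F] p = (y ⊗ₜ[F] (1 : A)) * (w ⊗ₜ[F] p) := by
          simp
        exact Submodule.subset_span ⟨y ⊗ₜ[F] (1 : A), w ⊗ₜ[F] p, this.symm⟩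
      exact hx trivial
    exact this
  | add u v hu hv => exact T.add_mem hu hv

/-- any two centroid elements commute -/
lemma cent_comm
    (hsimple₁ : ∃ x y : a, x * y ≠ 0)
    (hsimple₂ : ∀ I : Submodule F a,
      (∀ x ∈ I, ∀ y : a, x * y ∈ I ∧ y * x ∈ I) → I = ⊥ ∨ I = ⊤)
    (f g : a ⊗[F] A →ₗ[F] a ⊗[F] A)
    (hf : ∀ u v, f (u * v) = f u * v ∧ f (u * v) = u * f v)
    (hg : ∀ u v, g (u * v) = g u * v ∧ g (u * v) = u * g v)
    (u : a ⊗[F] A) : f (g u) = g (f u) := by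
  have : ∀ w ∈ Submodule.span F {w : a ⊗[F] A | ∃ u v : a ⊗[F] A, u * v = w},
      f (g w) = g (f w) := by
    intro w hw
    induction hw using Submodule.span_induction with
    | mem w hw =>
      obtain ⟨v₁, v₂, rfl⟩ := hw
      rw [(hg v₁ v₂).2, (hf v₁ (g v₂)).1, (hf v₁ v₂).1, (hg (f v₁) v₂).2]
    | zero => simp
    | add w₁ w₂ _ _ h1 h2 => simp [map_add, h1, h2]
    | smul c w _ h => simp [map_smul, h]
  exact this u (by rw [span_products_top hsimple₁ hsimple₂]; trivial)

lemma cent_eq_gam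
    [FiniteDimensional F a]
    (hsimple₁ : ∃ x y : a, x * y ≠ 0)
    (hsimple₂ : ∀ I : Submodule F a,
      (∀ x ∈ I, ∀ y : a, x * y ∈ I ∧ y * x ∈ I) → I = ⊥ ∨ I = ⊤)
    (hcentral : ∀ f : Module.End F a,
      (∀ x y : a, f (x * y) = f x * y ∧ f (x * y) = x * f y) →
      ∃ c : F, f = c • (LinearMap.id : a →ₗ[F] a))
    (f : a ⊗[F] A →ₗ[F] a ⊗[F] A)
    (hf : ∀ u v, f (u * v) = f u * v ∧ f (u * v) = u * f v) :
    ∃ p : A, f = gam F p := by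
  classical
  have hcomm : ∀ (q : A) (u : a ⊗[F] A), f (gam F q u) = gam F q (f u) := by
    intro q u
    exact (cent_comm hsimple₁ hsimple₂ (gam F q) f
      (fun u v => ⟨gam_cent_right q u v, gam_cent_left q u v⟩) hf u).symm
  have hA : Nontrivial a := by
    obtain ⟨x, y, hxy⟩ := hsimple₁
    exact ⟨x, 0, fun h => hxy (by simp [h])⟩
  set n := Module.finrank F a with hn
  have hnpos : 0 < n := Module.finrank_pos
  let b : Module.Basis (Fin n) F a := Module.finBasis F a
  let C : Fin n → (a ⊗[F] A →ₗ[F] A) := fun i =>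
    (TensorProduct.lid F A).toLinearMap ∘ₗ LinearMap.rTensor A (b.coord i)
  have hC : ∀ i (x : a) (q : A), C i (x ⊗ₜ[F] q) = b.repr x i • q := by
    intro i x q; simp [C]
  have hdecomp : ∀ u : a ⊗[F] A, ∑ i, b i ⊗ₜ[F] C i u = u := by
    intro u
    induction u using TensorProduct.induction_on with
    | zero => simp
    | tmul x q =>
      have h1 : ∀ i : Fin n, b i ⊗ₜ[F] C i (x ⊗ₜ[F] q) = (b.repr x i • b i) ⊗ₜ[F] q := by
        intro i
        rw [hC, tmul_smul, TensorProduct.smul_tmul']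
      rw [Finset.sum_congr rfl (fun i _ => h1 i), ← TensorProduct.sum_tmul, Module.Basis.sum_repr]
    | add u v hu hv => simp only [map_add, tmul_add, Finset.sum_add_distrib, hu, hv]
  let D : Module.Dual F A → (a ⊗[F] A →ₗ[F] a) := fun μ =>
    (TensorProduct.rid F a).toLinearMap ∘ₗ LinearMap.lTensor a μ
  have hD : ∀ μ (x : a) (q : A), D μ (x ⊗ₜ[F] q) = μ q • x := by
    intro μ x q; simp [D]
  have hDmulr : ∀ μ (w : a ⊗[F] A) (y : a), D μ (w * (y ⊗ₜ[F] (1:A))) = D μ w * y := by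
    intro μ w y
    induction w using TensorProduct.induction_on with
    | zero => simp [zero_mul]
    | tmul z q => simp [hD, smul_mul_assoc]
    | add w₁ w₂ h1 h2 => simp only [add_mul, map_add, h1, h2]
  have hDmull : ∀ μ (x : a) (w : a ⊗[F] A), D μ ((x ⊗ₜ[F] (1:A)) * w) = x * D μ w := by
    intro μ x w
    induction w using TensorProduct.induction_on with
    | zero => simp [mul_zero]
    | tmul z q => simp [hD, mul_smul_comm]
    | add w₁ w₂ h1 h2 => simp only [mul_add, map_add, h1, h2]
  have hker : ∀ μ : Module.Dual F A, ∃ c : F,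
      ∀ x : a, D μ (f (x ⊗ₜ[F] (1:A))) = c • x := by
    intro μ
    have hcent : ∀ x y : a,
        (D μ ∘ₗ f ∘ₗ (TensorProduct.mk F a A).flip 1) (x * y) =
          (D μ ∘ₗ f ∘ₗ (TensorProduct.mk F a A).flip 1) x * y ∧
        (D μ ∘ₗ f ∘ₗ (TensorProduct.mk F a A).flip 1) (x * y) =
          x * (D μ ∘ₗ f ∘ₗ (TensorProduct.mk F a A).flip 1) y := by
      intro x y
      have hxy : ((x * y) ⊗ₜ[F] (1:A)) = (x ⊗ₜ[F] (1:A)) * (y ⊗ₜ[F] (1:A)) := by simp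
      constructor
      · show D μ (f ((x * y) ⊗ₜ[F] (1:A))) = D μ (f (x ⊗ₜ[F] (1:A))) * y
        rw [hxy, (hf _ _).1, hDmulr]
      · show D μ (f ((x * y) ⊗ₜ[F] (1:A))) = x * D μ (f (y ⊗ₜ[F] (1:A)))
        rw [hxy, (hf _ _).2, hDmull]
    obtain ⟨c, hc⟩ := hcentral (D μ ∘ₗ f ∘ₗ (TensorProduct.mk F a A).flip 1) hcent
    exact ⟨c, fun x => by simpa using LinearMap.congr_fun hc x⟩
  let m : Fin n → Fin n → A := fun j i => C j (f (b i ⊗ₜ[F] (1:A)))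
  have hfb : ∀ i, f (b i ⊗ₜ[F] (1:A)) = ∑ j, b j ⊗ₜ[F] m j i := fun i => (hdecomp _).symm
  have key : ∀ μ : Module.Dual F A, ∃ c : F, ∀ i j : Fin n,
      μ (m j i) = if j = i then c else 0 := by
    intro μ
    obtain ⟨c, hc⟩ := hker μ
    refine ⟨c, fun i j => ?_⟩
    have h1 : D μ (f (b i ⊗ₜ[F] (1:A))) = c • b i := hc (b i)
    rw [hfb i, map_sum] at h1
    have h2 : ∑ k, μ (m k i) • b k = c • b i := by
      rw [Finset.sum_congr rfl (fun k _ => (hD μ (b k) (m k i)))] at h1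
      exact h1
    have h3 := congrArg (b.coord j) h2
    simpa [map_sum, map_smul, Module.Basis.coord_apply, Module.Basis.repr_self,
      Finsupp.single_apply, Finset.sum_ite_eq, eq_comm] using h3
  set i0 : Fin n := ⟨0, hnpos⟩ with hi0
  set p : A := m i0 i0 with hp
  have hm : ∀ i j, m j i = if j = i then p else 0 := by
    intro i j
    have hall : ∀ μ : Module.Dual F A, μ (m j i - (if j = i then p else 0)) = 0 := by
      intro μ
      obtain ⟨c, hc⟩ := key μ
      have h2 : μ p = c := by simpa using hc i0 i0
      by_cases h : j = i
      · subst h; simp [map_sub, hc, h2]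
      · simp [map_sub, h, hc i j]
    have h0 := (Module.forall_dual_apply_eq_zero_iff F _).1 hall
    exact sub_eq_zero.1 h0
  have hfb' : ∀ i, f (b i ⊗ₜ[F] (1:A)) = b i ⊗ₜ[F] p := by
    intro i
    have h1 : ∀ j : Fin n, b j ⊗ₜ[F] m j i = if j = i then b i ⊗ₜ[F] p else 0 := by
      intro j
      rw [hm i j]
      by_cases h : j = i
      · subst h; simp
      · simp [h]
    rw [hfb i, Finset.sum_congr rfl (fun j _ => h1 j), Finset.sum_ite_eq']
    simp
  have hx1 : ∀ x : a, f (x ⊗ₜ[F] (1:A)) = x ⊗ₜ[F] p := by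
    intro x
    calc f (x ⊗ₜ[F] (1:A)) = f ((∑ i, b.repr x i • b i) ⊗ₜ[F] (1:A)) := by
          rw [Module.Basis.sum_repr]
    _ = ∑ i, b.repr x i • f (b i ⊗ₜ[F] (1:A)) := by
          rw [TensorProduct.sum_tmul, map_sum]
          exact Finset.sum_congr rfl fun i _ => by rw [← TensorProduct.smul_tmul', map_smul]
    _ = (∑ i, b.repr x i • b i) ⊗ₜ[F] p := by
          rw [TensorProduct.sum_tmul]
          exact Finset.sum_congr rfl fun i _ => by rw [hfb' i, TensorProduct.smul_tmul']
    _ = x ⊗ₜ[F] p := by rw [Module.Basis.sum_repr]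
  refine ⟨p, TensorProduct.ext' fun x q => ?_⟩
  have h1 : f (x ⊗ₜ[F] q) = gam F q (f (x ⊗ₜ[F] (1:A))) := by
    rw [← hcomm q]
    congr 1
    simp
  rw [h1, hx1, gam_tmul, gam_tmul, mul_comm]

lemma gam_add (p q : A) (u : a ⊗[F] A) : gam F (p + q) u = gam F p u + gam F q u := by
  induction u using TensorProduct.induction_on with
  | zero => simp
  | tmul x r => simp [add_mul, tmul_add]
  | add u₁ u₂ h1 h2 => simp only [map_add, h1, h2]; abel

lemma gam_smul (c : F) (p : A) (u : a ⊗[F] A) : gam F (c • p) u = c • gam F p u := by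
  induction u using TensorProduct.induction_on with
  | zero => simp
  | tmul x r => simp [smul_mul_assoc, tmul_smul]
  | add u₁ u₂ h1 h2 => simp only [map_add, h1, h2, smul_add]

lemma gam_mul (p q : A) (u : a ⊗[F] A) : gam F (p * q) u = gam F p (gam F q u) := by
  induction u using TensorProduct.induction_on with
  | zero => simp
  | tmul x r => simp [mul_assoc]
  | add u₁ u₂ h1 h2 => simp only [map_add, h1, h2]

lemma gam_one (u : a ⊗[F] A) : gam F (1 : A) u = u := by
  induction u using TensorProduct.induction_on with
  | zero => simp
  | tmul x r => simp
  | add u₁ u₂ h1 h2 => simp only [map_add, h1, h2]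

lemma lTensor_mul' (σ : A →ₗ[F] A) (hσ : ∀ p q : A, σ (p * q) = σ p * σ q)
    (u v : a ⊗[F] A) :
    LinearMap.lTensor a σ (u * v) = LinearMap.lTensor a σ u * LinearMap.lTensor a σ v := by
  induction u using TensorProduct.induction_on with
  | zero => simp [zero_mul]
  | tmul x q =>
    induction v using TensorProduct.induction_on with
    | zero => simp [mul_zero]
    | tmul y r => simp [hσ]
    | add v₁ v₂ h1 h2 => simp only [mul_add, map_add, h1, h2]
  | add u₁ u₂ h1 h2 => simp only [add_mul, map_add, h1, h2]

lemma lTensor_gam (σ : A →ₗ[F] A) (hσ : ∀ p q : A, σ (p * q) = σ p * σ q)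
    (p : A) (u : a ⊗[F] A) :
    LinearMap.lTensor a σ (gam F p u) = gam F (σ p) (LinearMap.lTensor a σ u) := by
  induction u using TensorProduct.induction_on with
  | zero => simp
  | tmul x q => simp [hσ]
  | add u₁ u₂ h1 h2 => simp only [map_add, h1, h2]

lemma gam_injective (hsimple₁ : ∃ x y : a, x * y ≠ 0) {p q : A}
    (h : ∀ u : a ⊗[F] A, gam F p u = gam F q u) : p = q := by
  obtain ⟨x, y, hxy⟩ := hsimple₁
  have hx : x ≠ 0 := fun h0 => hxy (by simp [h0])
  have hne : ¬ ∀ μ : Module.Dual F a, μ x = 0 := by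
    rw [Module.forall_dual_apply_eq_zero_iff]; exact hx
  push_neg at hne
  obtain ⟨μ, hμ⟩ := hne
  have h1 := h (x ⊗ₜ[F] (1 : A))
  rw [gam_tmul, gam_tmul, mul_one, mul_one] at h1
  have h2 := congrArg ((TensorProduct.lid F A).toLinearMap ∘ₗ LinearMap.rTensor A μ) h1
  simp only [LinearMap.coe_comp, Function.comp_apply, LinearMap.rTensor_tmul,
    LinearEquiv.coe_coe, TensorProduct.lid_tmul] at h2
  have h3 := congrArg (fun z => (μ x)⁻¹ • z) h2
  simpa [smul_smul, inv_mul_cancel₀ hμ] using h3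

end AutTensorAux

set_option maxHeartbeats 1000000 in
/-- Let `a` be a finite-dimensional central simple `F`-algebra (not
necessarily associative or unital) and `A` a unital commutative associative `F`-algebra.
Then every `F`-algebra automorphism `φ` of `a ⊗ A` is the composition of the automorphism
induced on the second tensor factor by an `F`-algebra automorphism `ψ` of `A` with an
`A`-algebra automorphism `χ` of `a ⊗ A` (i.e. a multiplicative `F`-linear automorphism
commuting with the `A`-action `γ_p : x ⊗ q ↦ x ⊗ pq`). -/
theorem aut_tensor_splits
    (F a A : Type*) [Field F]
    [NonUnitalNonAssocRing a] [Module F a] [SMulCommClass F a a] [IsScalarTower F a a]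
    [FiniteDimensional F a]
    -- `a` is simple: nontrivial multiplication and no proper nonzero two-sided ideals
    (hsimple₁ : ∃ x y : a, x * y ≠ 0)
    (hsimple₂ : ∀ I : Submodule F a,
      (∀ x ∈ I, ∀ y : a, x * y ∈ I ∧ y * x ∈ I) → I = ⊥ ∨ I = ⊤)
    -- `a` is central: its centroid consists of scalar multiples of the identity
    (hcentral : ∀ f : Module.End F a,
      (∀ x y : a, f (x * y) = f x * y ∧ f (x * y) = x * f y) →
      ∃ c : F, f = c • (LinearMap.id : a →ₗ[F] a))
    [CommRing A] [Algebra F A]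
    (φ : a ⊗[F] A ≃ₗ[F] a ⊗[F] A)
    (hφ : ∀ u v : a ⊗[F] A, φ (u * v) = φ u * φ v) :
    ∃ ψ : A ≃ₐ[F] A, ∃ χ : a ⊗[F] A ≃ₗ[F] a ⊗[F] A,
      (∀ u v : a ⊗[F] A, χ (u * v) = χ u * χ v) ∧
      (∀ (p : A) (u : a ⊗[F] A),
        χ (LinearMap.lTensor a (LinearMap.mulLeft F p) u)
          = LinearMap.lTensor a (LinearMap.mulLeft F p) (χ u)) ∧
      φ = (LinearEquiv.lTensor a ψ.toLinearEquiv).trans χ := by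
  classical
  have hφ' : ∀ u v : a ⊗[F] A, φ.symm (u * v) = φ.symm u * φ.symm v := by
    intro u v
    apply φ.injective
    rw [hφ, φ.apply_symm_apply, φ.apply_symm_apply, φ.apply_symm_apply]
  have hconj : ∀ p : A, ∃ q : A,
      φ.toLinearMap ∘ₗ gam F p ∘ₗ φ.symm.toLinearMap = gam F q := by
    intro p
    apply cent_eq_gam hsimple₁ hsimple₂ hcentral
    intro u v
    constructor
    · show φ (gam F p (φ.symm (u * v))) = φ (gam F p (φ.symm u)) * v
      rw [hφ', gam_cent_right, hφ, φ.apply_symm_apply]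
    · show φ (gam F p (φ.symm (u * v))) = u * φ (gam F p (φ.symm v))
      rw [hφ', gam_cent_left, hφ, φ.apply_symm_apply]
  choose Ψ hΨ using hconj
  have hconj' : ∀ p : A, ∃ q : A,
      φ.symm.toLinearMap ∘ₗ gam F p ∘ₗ φ.toLinearMap = gam F q := by
    intro p
    apply cent_eq_gam hsimple₁ hsimple₂ hcentral
    intro u v
    constructor
    · show φ.symm (gam F p (φ (u * v))) = φ.symm (gam F p (φ u)) * v
      rw [hφ, gam_cent_right, hφ', φ.symm_apply_apply]
    · show φ.symm (gam F p (φ (u * v))) = u * φ.symm (gam F p (φ v))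
      rw [hφ, gam_cent_left, hφ', φ.symm_apply_apply]
  choose Ψ' hΨ' using hconj'
  have hΨp : ∀ p u, φ (gam F p (φ.symm u)) = gam F (Ψ p) u :=
    fun p u => LinearMap.congr_fun (hΨ p) u
  have hΨ'p : ∀ p u, φ.symm (gam F p (φ u)) = gam F (Ψ' p) u :=
    fun p u => LinearMap.congr_fun (hΨ' p) u
  have hΨc : ∀ p u, φ (gam F p u) = gam F (Ψ p) (φ u) := by
    intro p u
    have := hΨp p (φ u)
    rwa [φ.symm_apply_apply] at this
  have hgam_eq : ∀ p q : A, (∀ u : a ⊗[F] A, gam F p u = gam F q u) → p = q :=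
    fun p q h => gam_injective hsimple₁ h
  have hΨΨ' : ∀ p, Ψ (Ψ' p) = p := by
    intro p
    apply hgam_eq
    intro u
    rw [← hΨp (Ψ' p) u]
    have h1 := hΨ'p p (φ.symm u)
    rw [φ.apply_symm_apply] at h1
    rw [← h1, φ.apply_symm_apply]
  have hΨ'Ψ : ∀ p, Ψ' (Ψ p) = p := by
    intro p
    apply hgam_eq
    intro u
    rw [← hΨ'p (Ψ p) u]
    have h1 := hΨp p (φ u)
    rw [φ.symm_apply_apply] at h1
    rw [← h1, φ.symm_apply_apply]
  have hΨadd : ∀ p q, Ψ (p + q) = Ψ p + Ψ q := by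
    intro p q
    apply hgam_eq
    intro u
    rw [gam_add, ← hΨp (p + q) u, ← hΨp p u, ← hΨp q u, ← map_add, ← gam_add]
  have hΨmul : ∀ p q, Ψ (p * q) = Ψ p * Ψ q := by
    intro p q
    apply hgam_eq
    intro u
    rw [gam_mul, ← hΨp (p * q) u]
    have h1 : gam F (p * q) (φ.symm u) = gam F p (gam F q (φ.symm u)) := gam_mul p q _
    rw [h1]
    have h2 : gam F q (φ.symm u) = φ.symm (gam F (Ψ q) u) := by
      rw [← hΨp q u, φ.symm_apply_apply]
    rw [h2, hΨp p (gam F (Ψ q) u)]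
  have hΨone : Ψ 1 = 1 := by
    apply hgam_eq
    intro u
    rw [← hΨp 1 u, gam_one, gam_one, φ.apply_symm_apply]
  have hΨsmul : ∀ (c : F) (p : A), Ψ (c • p) = c • Ψ p := by
    intro c p
    apply hgam_eq
    intro u
    rw [gam_smul, ← hΨp (c • p) u, gam_smul, map_smul, hΨp p u]
  let ψr : A ≃+* A :=
    { toFun := Ψ, invFun := Ψ', left_inv := hΨ'Ψ, right_inv := hΨΨ',
      map_mul' := hΨmul, map_add' := hΨadd }
  let ψ : A ≃ₐ[F] A := AlgEquiv.ofRingEquiv (f := ψr) (by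
    intro c
    show Ψ (algebraMap F A c) = algebraMap F A c
    rw [Algebra.algebraMap_eq_smul_one, hΨsmul, hΨone])
  have hψ : ∀ p, ψ p = Ψ p := fun p => rfl
  have hψs : ∀ p, ψ.symm p = Ψ' p := fun p => rfl
  set σ : A →ₗ[F] A := ψ.symm.toLinearEquiv.toLinearMap with hσdef
  have hσmul : ∀ p q : A, σ (p * q) = σ p * σ q := fun p q => map_mul ψ.symm p q
  set L : a ⊗[F] A ≃ₗ[F] a ⊗[F] A := LinearEquiv.lTensor a ψ.toLinearEquiv with hLdef
  have hLsymm : ∀ u, L.symm u = LinearMap.lTensor a σ u := fun u => rfl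
  refine ⟨ψ, L.symm.trans φ, ?_, ?_, ?_⟩
  · intro u v
    show φ (L.symm (u * v)) = φ (L.symm u) * φ (L.symm v)
    rw [← hφ]
    congr 1
    rw [hLsymm, hLsymm, hLsymm, lTensor_mul' σ hσmul]
  · intro p u
    show φ (L.symm (gam F p u)) = gam F p (φ (L.symm u))
    rw [hLsymm, hLsymm, lTensor_gam σ hσmul, hΨc]
    congr 2
    show Ψ (Ψ' p) = p
    exact hΨΨ' p
  · apply LinearEquiv.ext
    intro u
    show φ u = φ (L.symm (L u))
    rw [L.symm_apply_apply]
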